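/- Let A be a Boolean algebra generated by an ω-independent subset X. Then every ω-preserving function f from X into any Boolean algebra B extends to a unique homomorphism from A to B. -/
import Mathlib


open scoped Classical

variable {A : Type*}

/-- ω-independence: `⊥ ∉ X`, (⊥1), (⊥3). -/
def OmegaIndep [BooleanAlgebra A] (X : Set A) : Prop :=
  (⊥ : A) ∉ X ∧
  (∀ F : Finset A, F.Nonempty → ↑F ⊆ X → F.sup id ≠ ⊤) ∧
  (∀ F G : Finset A, F.Nonempty → G.Nonempty → ↑F ⊆ X → ↑G ⊆ X →
      F.inf id ≠ ⊥ → F.inf id ≤ G.sup id → (F ∩ G).Nonempty)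

/-- n-independence: `⊥ ∉ X`, (⊥1), (⊥2)_n, (⊥3); `n = ⊤` codes ω. -/
def NIndep [BooleanAlgebra A] (n : ℕ∞) (X : Set A) : Prop :=
  (⊥ : A) ∉ X ∧
  (∀ F : Finset A, F.Nonempty → ↑F ⊆ X → F.sup id ≠ ⊤) ∧
  (∀ F : Finset A, F.Nonempty → ↑F ⊆ X → F.inf id = ⊥ →
      ∃ F' ⊆ F, (F'.card : ℕ∞) ≤ n ∧ F'.inf id = ⊥) ∧
  (∀ F G : Finset A, F.Nonempty → G.Nonempty → ↑F ⊆ X → ↑G ⊆ X →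
      F.inf id ≠ ⊥ → F.inf id ≤ G.sup id → (F ∩ G).Nonempty)

/-- Elementary product `∏_{x ∈ R} x^{ε x}`. -/
def elemProd [BooleanAlgebra A] (R : Finset A) (ε : A → Bool) : A :=
  R.inf (fun x => if ε x then x else xᶜ)

/-- `f` is n-preserving on `X` (`n = ⊤` codes ω-preserving). -/
def NPreserving [BooleanAlgebra A] {B : Type*} [BooleanAlgebra B]
    (n : ℕ∞) (X : Set A) (f : A → B) : Prop :=
  ∀ F : Finset A, ↑F ⊆ X → (F.card : ℕ∞) ≤ n → F.inf id = ⊥ → F.inf f = ⊥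

/-- Membership in the subalgebra generated by `X`. -/
inductive Gen [BooleanAlgebra A] (X : Set A) : A → Prop
  | of {x : A} : x ∈ X → Gen X x
  | bot : Gen X ⊥
  | top : Gen X ⊤
  | inf {x y : A} : Gen X x → Gen X y → Gen X (x ⊓ y)
  | sup {x y : A} : Gen X x → Gen X y → Gen X (x ⊔ y)
  | compl {x : A} : Gen X x → Gen X xᶜ

/-- `X` generates the Boolean algebra `A`. -/
def Generates [BooleanAlgebra A] (X : Set A) : Prop := ∀ a : A, Gen X a

namespace Stmt7Aux

variable {α : Type*} {β : Type*} [BooleanAlgebra β]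

/-- Elementary product over `R` where `S` marks positive occurrences. -/
noncomputable def ep (g : α → β) (R S : Finset α) : β :=
  R.inf (fun x => if x ∈ S then g x else (g x)ᶜ)

@[simp] lemma ep_empty (g : α → β) (S : Finset α) : ep g ∅ S = ⊤ :=
  Finset.inf_empty

lemma ep_le_inf (g : α → β) {R S : Finset α} (hS : S ⊆ R) : ep g R S ≤ S.inf g :=
  Finset.le_inf fun x hx => le_of_le_of_eq (Finset.inf_le (hS hx)) (if_pos hx)

lemma ep_step (g : α → β) {x : α} {R S : Finset α} (hxR : x ∉ R) (hxS : x ∉ S) :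
    ep g (insert x R) S ⊔ ep g (insert x R) (insert x S) = ep g R S := by
  have h1 : ep g (insert x R) S = (g x)ᶜ ⊓ ep g R S := by
    rw [ep, Finset.inf_insert, if_neg hxS]; rfl
  have h2 : ep g (insert x R) (insert x S) = g x ⊓ ep g R S := by
    rw [ep, Finset.inf_insert, if_pos (Finset.mem_insert_self x S)]
    congr 1
    refine Finset.inf_congr rfl fun y hy => ?_
    have hyx : (y ∈ insert x S) ↔ (y ∈ S) := by
      simp only [Finset.mem_insert]
      constructor
      · rintro (rfl | h)
        · exact absurd hy hxR
        · exact h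
      · exact Or.inr
    rw [if_congr hyx rfl rfl]
  rw [h1, h2, ← inf_sup_right, compl_sup_eq_top, top_inf_eq]

lemma ep_refine (g : α → β) (D : Finset α) :
    ∀ R S : Finset α, Disjoint R D → S ⊆ R →
      (D.powerset.sup fun U => ep g (R ∪ D) (S ∪ U)) = ep g R S := by
  induction D using Finset.induction_on with
  | empty => intro R S _ _; simp
  | @insert a D' ha IH =>
    intro R S hdisj hS
    have hxR : a ∉ R := fun h => Finset.disjoint_left.mp hdisj h (Finset.mem_insert_self a D')
    have hxS : a ∉ S := fun h => hxR (hS h)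
    have hdisj'' : Disjoint (insert a R) D' := by
      rw [Finset.disjoint_insert_left]
      exact ⟨ha, hdisj.mono_right (Finset.subset_insert a D')⟩
    have h1 := IH (insert a R) S hdisj'' (hS.trans (Finset.subset_insert a R))
    have h2 := IH (insert a R) (insert a S) hdisj'' (Finset.insert_subset_insert a hS)
    simp only [Finset.insert_union] at h1 h2
    rw [Finset.powerset_insert, Finset.sup_union, Finset.sup_image]
    simp only [Function.comp_def, Finset.union_insert]
    rw [h1, h2]
    exact ep_step g hxR hxS

lemma sup_partition (g : α → β) (R : Finset α) : R.powerset.sup (ep g R) = ⊤ := by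
  have h := ep_refine g R ∅ ∅ (Finset.disjoint_left.mpr (by simp)) (Finset.Subset.refl _)
  simpa using h

lemma ep_disj (g : α → β) {R S S' : Finset α} (hS : S ⊆ R) (hS' : S' ⊆ R) (hne : S ≠ S') :
    ep g R S ⊓ ep g R S' = ⊥ := by
  have hex : ∃ x, ¬ (x ∈ S ↔ x ∈ S') := by
    by_contra h
    push_neg at h
    exact hne (Finset.ext h)
  obtain ⟨x, hx⟩ := hex
  by_cases h1 : x ∈ S
  · have h2 : x ∉ S' := fun h2 => hx ⟨fun _ => h2, fun _ => h1⟩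
    have l1 : ep g R S ≤ g x := le_of_le_of_eq (Finset.inf_le (hS h1)) (if_pos h1)
    have l2 : ep g R S' ≤ (g x)ᶜ := le_of_le_of_eq (Finset.inf_le (hS h1)) (if_neg h2)
    exact le_bot_iff.mp (le_of_le_of_eq (inf_le_inf l1 l2) inf_compl_eq_bot)
  · have h2 : x ∈ S' := by
      by_contra h2
      exact hx ⟨fun h => absurd h h1, fun h => absurd h h2⟩
    have l1 : ep g R S ≤ (g x)ᶜ := le_of_le_of_eq (Finset.inf_le (hS' h2)) (if_neg h1)
    have l2 : ep g R S' ≤ g x := le_of_le_of_eq (Finset.inf_le (hS' h2)) (if_pos h2)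
    exact le_bot_iff.mp (le_of_le_of_eq (inf_le_inf l1 l2) compl_inf_eq_bot)

lemma sup_inter (g : α → β) {R : Finset α} {T T' : Finset (Finset α)}
    (hT : ∀ S ∈ T, S ⊆ R) (hT' : ∀ S ∈ T', S ⊆ R) :
    T.sup (ep g R) ⊓ T'.sup (ep g R) = (T ∩ T').sup (ep g R) := by
  apply le_antisymm
  · rw [Finset.sup_inf_distrib_right]
    refine Finset.sup_le fun S hS => ?_
    rw [Finset.sup_inf_distrib_left]
    refine Finset.sup_le fun S' hS' => ?_
    by_cases h : S = S'
    · subst h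
      exact le_trans inf_le_left (Finset.le_sup (Finset.mem_inter.mpr ⟨hS, hS'⟩))
    · rw [ep_disj g (hT S hS) (hT' S' hS') h]; exact bot_le
  · refine Finset.sup_le fun S hS => ?_
    obtain ⟨h1, h2⟩ := Finset.mem_inter.mp hS
    exact le_inf (Finset.le_sup h1) (Finset.le_sup h2)

lemma sup_compl (g : α → β) {R : Finset α} {T : Finset (Finset α)} (hT : ∀ S ∈ T, S ⊆ R) :
    (T.sup (ep g R))ᶜ = (R.powerset \ T).sup (ep g R) := by
  have hTp : T ⊆ R.powerset := fun S hS => Finset.mem_powerset.mpr (hT S hS)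
  have hinf : T.sup (ep g R) ⊓ (R.powerset \ T).sup (ep g R) = ⊥ := by
    rw [sup_inter g hT (fun S hS => Finset.mem_powerset.mp (Finset.mem_sdiff.mp hS).1),
      Finset.inter_sdiff_self, Finset.sup_empty]
  have hsup : T.sup (ep g R) ⊔ (R.powerset \ T).sup (ep g R) = ⊤ := by
    rw [← Finset.sup_union, Finset.union_sdiff_of_subset hTp, sup_partition]
  exact ((IsCompl.of_eq hinf hsup).compl_eq).symm ▸ (IsCompl.of_eq hinf hsup).compl_eq

/-- The canonical refinement of a family of marks from `R` to a larger `R'`. -/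
noncomputable def extT (R R' : Finset α) (T : Finset (Finset α)) : Finset (Finset α) :=
  T.biUnion fun S => (R' \ R).powerset.image (S ∪ ·)

lemma mem_extT {R R' : Finset α} (hRR : R ⊆ R') {T : Finset (Finset α)}
    (hT : ∀ S ∈ T, S ⊆ R) {S' : Finset α} (h : S' ∈ extT R R' T) : S' ⊆ R' := by
  simp only [extT, Finset.mem_biUnion, Finset.mem_image, Finset.mem_powerset] at h
  obtain ⟨S, hS, U, hU, rfl⟩ := h
  exact Finset.union_subset ((hT S hS).trans hRR) (hU.trans (Finset.sdiff_subset))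

lemma sup_extT (g : α → β) {R R' : Finset α} (hRR : R ⊆ R') {T : Finset (Finset α)}
    (hT : ∀ S ∈ T, S ⊆ R) :
    (extT R R' T).sup (ep g R') = T.sup (ep g R) := by
  rw [extT, Finset.sup_biUnion]
  refine Finset.sup_congr rfl fun S hS => ?_
  rw [Finset.sup_image]
  have h := ep_refine g (R' \ R) R S (Finset.disjoint_sdiff) (hT S hS)
  rw [Finset.union_sdiff_of_subset hRR] at h
  exact h

lemma ep_decomp (g : α → β) {R S : Finset α} (hS : S ⊆ R) :
    ep g R S = S.inf g ⊓ (R \ S).inf (fun x => (g x)ᶜ) := by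
  apply le_antisymm
  · refine le_inf (ep_le_inf g hS) (Finset.le_inf fun x hx => ?_)
    obtain ⟨h1, h2⟩ := Finset.mem_sdiff.mp hx
    exact le_of_le_of_eq (Finset.inf_le h1) (if_neg h2)
  · refine Finset.le_inf fun x hx => ?_
    by_cases h : x ∈ S
    · exact le_of_le_of_eq (le_trans inf_le_left (Finset.inf_le h)) (if_pos h).symm
    · exact le_of_le_of_eq (le_trans inf_le_right (Finset.inf_le (Finset.mem_sdiff.mpr ⟨hx, h⟩)))
        (if_neg h).symm

lemma inf_compl_eq_compl_sup (G : Finset β) : G.inf (fun x => xᶜ) = (G.sup id)ᶜ := by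
  induction G using Finset.induction_on with
  | empty => rw [Finset.inf_empty, Finset.sup_empty, compl_bot]
  | @insert a G' ha IH =>
    rw [Finset.inf_insert, Finset.sup_insert, compl_sup, IH]
    rfl



lemma rep_exists {α : Type*} [BooleanAlgebra α] {X : Set α} {a : α} (ha : Gen X a) :
    ∃ (R : Finset α) (T : Finset (Finset α)), ↑R ⊆ X ∧ (∀ S ∈ T, S ⊆ R) ∧
      a = T.sup (ep id R) := by
  induction ha with
  | @of x hx =>
    exact ⟨{x}, {{x}}, by simpa using hx, by simp, by simp [ep]⟩
  | bot => exact ⟨∅, ∅, by simp, by simp, by simp⟩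
  | top => exact ⟨∅, {∅}, by simp, by simp, by simp⟩
  | inf hx hy ihx ihy =>
    obtain ⟨R₁, T₁, hX₁, hT₁, he₁⟩ := ihx
    obtain ⟨R₂, T₂, hX₂, hT₂, he₂⟩ := ihy
    refine ⟨R₁ ∪ R₂, extT R₁ (R₁ ∪ R₂) T₁ ∩ extT R₂ (R₁ ∪ R₂) T₂, ?_, ?_, ?_⟩
    · rw [Finset.coe_union]; exact Set.union_subset hX₁ hX₂
    · intro S hS
      exact mem_extT Finset.subset_union_left hT₁ (Finset.mem_of_mem_inter_left hS)
    · rw [he₁, he₂, ← sup_extT id Finset.subset_union_left hT₁,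
        ← sup_extT id Finset.subset_union_right hT₂,
        sup_inter id (fun S hS => mem_extT Finset.subset_union_left hT₁ hS)
          (fun S hS => mem_extT Finset.subset_union_right hT₂ hS)]
  | sup hx hy ihx ihy =>
    obtain ⟨R₁, T₁, hX₁, hT₁, he₁⟩ := ihx
    obtain ⟨R₂, T₂, hX₂, hT₂, he₂⟩ := ihy
    refine ⟨R₁ ∪ R₂, extT R₁ (R₁ ∪ R₂) T₁ ∪ extT R₂ (R₁ ∪ R₂) T₂, ?_, ?_, ?_⟩
    · rw [Finset.coe_union]; exact Set.union_subset hX₁ hX₂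
    · intro S hS
      rcases Finset.mem_union.mp hS with h | h
      · exact mem_extT Finset.subset_union_left hT₁ h
      · exact mem_extT Finset.subset_union_right hT₂ h
    · rw [he₁, he₂, ← sup_extT id Finset.subset_union_left hT₁,
        ← sup_extT id Finset.subset_union_right hT₂, Finset.sup_union]
  | compl hx ihx =>
    obtain ⟨R, T, hX, hT, he⟩ := ihx
    refine ⟨R, R.powerset \ T, hX,
      fun S hS => Finset.mem_powerset.mp (Finset.mem_sdiff.mp hS).1, ?_⟩
    rw [he]
    exact sup_compl id hT

lemma ep_zero {α : Type*} {β : Type*} [BooleanAlgebra α] [BooleanAlgebra β] {X : Set α}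
    (hind : OmegaIndep X) {f : α → β} (hf : NPreserving ⊤ X f) {R S : Finset α}
    (hR : ↑R ⊆ X) (hS : S ⊆ R) (h0 : ep id R S = ⊥) : ep f R S = ⊥ := by
  by_cases hb : S.inf id = ⊥
  · have h := hf S ((Finset.coe_subset.mpr hS).trans hR) le_top hb
    exact le_bot_iff.mp (le_of_le_of_eq (ep_le_inf f hS) h)
  · exfalso
    rw [ep_decomp id hS] at h0
    simp only [id_eq] at h0
    rw [inf_compl_eq_compl_sup] at h0
    have hle : S.inf id ≤ (R \ S).sup id := by
      rwa [← sdiff_eq, sdiff_eq_bot_iff] at h0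
    by_cases hG : (R \ S).Nonempty
    · by_cases hSn : S.Nonempty
      · have hcap := hind.2.2 S (R \ S) hSn hG ((Finset.coe_subset.mpr hS).trans hR)
          ((Finset.coe_subset.mpr Finset.sdiff_subset).trans hR) hb hle
        rw [Finset.inter_sdiff_self] at hcap
        exact Finset.not_nonempty_empty hcap
      · rw [Finset.not_nonempty_iff_eq_empty] at hSn
        subst hSn
        rw [Finset.inf_empty] at hle
        refine hind.2.1 (R \ ∅) hG ?_ (top_le_iff.mp hle)
        simpa using hR
    · rw [Finset.not_nonempty_iff_eq_empty] at hG
      rw [hG, Finset.sup_empty] at hle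
      exact hb (le_bot_iff.mp hle)

lemma transfer {α : Type*} {β : Type*} [BooleanAlgebra α] [BooleanAlgebra β] {X : Set α}
    (hind : OmegaIndep X) {f : α → β} (hf : NPreserving ⊤ X f)
    {R₁ R₂ : Finset α} {T₁ T₂ : Finset (Finset α)}
    (hX₁ : ↑R₁ ⊆ X) (hX₂ : ↑R₂ ⊆ X) (hT₁ : ∀ S ∈ T₁, S ⊆ R₁) (hT₂ : ∀ S ∈ T₂, S ⊆ R₂)
    (hle : T₁.sup (ep id R₁) ≤ T₂.sup (ep id R₂)) :
    T₁.sup (ep f R₁) ≤ T₂.sup (ep f R₂) := by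
  have key : ∀ (Ta Tb : Finset (Finset α)) (R : Finset α), ↑R ⊆ X →
      (∀ S ∈ Ta, S ⊆ R) → (∀ S ∈ Tb, S ⊆ R) →
      Ta.sup (ep id R) ≤ Tb.sup (ep id R) → Ta.sup (ep f R) ≤ Tb.sup (ep f R) := by
    intro Ta Tb R hXR h1 h2 hle12
    refine Finset.sup_le fun S hS => ?_
    by_cases h0 : ep id R S = ⊥
    · rw [ep_zero hind hf hXR (h1 S hS) h0]
      exact bot_le
    · have hmem : S ∈ Tb := by
        by_contra hmem
        apply h0
        have hup : ep id R S ≤ Tb.sup (ep id R) := le_trans (Finset.le_sup hS) hle12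
        have hdist : ep id R S ≤ Tb.sup (fun S' => ep id R S ⊓ ep id R S') := by
          rw [← Finset.sup_inf_distrib_left]
          exact le_inf le_rfl hup
        refine le_bot_iff.mp (le_trans hdist (Finset.sup_le fun S' hS' => ?_))
        rw [ep_disj id (h1 S hS) (h2 S' hS') (fun h => hmem (h ▸ hS'))]
      exact Finset.le_sup hmem
  have hXu : ↑(R₁ ∪ R₂) ⊆ X := by
    rw [Finset.coe_union]; exact Set.union_subset hX₁ hX₂
  have eA := sup_extT f (R' := R₁ ∪ R₂) Finset.subset_union_left hT₁
  have eB := sup_extT f (R' := R₁ ∪ R₂) Finset.subset_union_right hT₂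
  have eA' := sup_extT id (R' := R₁ ∪ R₂) Finset.subset_union_left hT₁
  have eB' := sup_extT id (R' := R₁ ∪ R₂) Finset.subset_union_right hT₂
  rw [← eA, ← eB]
  refine key _ _ _ hXu (fun S hS => mem_extT Finset.subset_union_left hT₁ hS)
    (fun S hS => mem_extT Finset.subset_union_right hT₂ hS) ?_
  rw [eA', eB']
  exact hle

end Stmt7Aux

open Stmt7Aux in
/-- if `X` is ω-independent and generates `A`, then every ω-preserving
map from `X` into any Boolean algebra `B` extends to a unique homomorphism. -/
theorem stmt_7.{u, v} {A : Type u} [BooleanAlgebra A] (X : Set A)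
    (hgen : Generates X) (hind : OmegaIndep X)
    {B : Type v} [BooleanAlgebra B] (f : A → B) (hf : NPreserving ⊤ X f) :
    ∃! g : BoundedLatticeHom A B, ∀ x ∈ X, g x = f x := by
  classical
  have hrep : ∀ a : A, ∃ RT : Finset A × Finset (Finset A),
      ↑RT.1 ⊆ X ∧ (∀ S ∈ RT.2, S ⊆ RT.1) ∧ a = RT.2.sup (ep id RT.1) := by
    intro a
    obtain ⟨R, T, h1, h2, h3⟩ := rep_exists (hgen a)
    exact ⟨(R, T), h1, h2, h3⟩
  choose rep hrX hrT hre using hrep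
  set g0 : A → B := fun a => (rep a).2.sup (ep f (rep a).1) with hg0def
  have gspec : ∀ (a : A) (R : Finset A) (T : Finset (Finset A)), ↑R ⊆ X →
      (∀ S ∈ T, S ⊆ R) → a = T.sup (ep id R) → g0 a = T.sup (ep f R) := by
    intro a R T h1 h2 h3
    simp only [hg0def]
    refine le_antisymm ?_ ?_
    · exact transfer hind hf (hrX a) h1 (hrT a) h2 (le_of_eq ((hre a).symm.trans h3))
    · exact transfer hind hf h1 (hrX a) h2 (hrT a) (le_of_eq (h3.symm.trans (hre a)))
  have pair : ∀ a b : A, ∃ (R : Finset A) (Ta Tb : Finset (Finset A)), ↑R ⊆ X ∧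
      (∀ S ∈ Ta, S ⊆ R) ∧ (∀ S ∈ Tb, S ⊆ R) ∧
      a = Ta.sup (ep id R) ∧ b = Tb.sup (ep id R) := by
    intro a b
    obtain ⟨R₁, T₁, hX₁, hT₁, he₁⟩ := rep_exists (hgen a)
    obtain ⟨R₂, T₂, hX₂, hT₂, he₂⟩ := rep_exists (hgen b)
    refine ⟨R₁ ∪ R₂, extT R₁ (R₁ ∪ R₂) T₁, extT R₂ (R₁ ∪ R₂) T₂,
      by rw [Finset.coe_union]; exact Set.union_subset hX₁ hX₂,
      fun S hS => mem_extT Finset.subset_union_left hT₁ hS,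
      fun S hS => mem_extT Finset.subset_union_right hT₂ hS,
      by rw [sup_extT id Finset.subset_union_left hT₁]; exact he₁,
      by rw [sup_extT id Finset.subset_union_right hT₂]; exact he₂⟩
  have hsup : ∀ a b : A, g0 (a ⊔ b) = g0 a ⊔ g0 b := by
    intro a b
    obtain ⟨R, Ta, Tb, hX, hTa, hTb, ha, hb⟩ := pair a b
    have h1 : g0 a = Ta.sup (ep f R) := gspec a R Ta hX hTa ha
    have h2 : g0 b = Tb.sup (ep f R) := gspec b R Tb hX hTb hb
    have h3 : g0 (a ⊔ b) = (Ta ∪ Tb).sup (ep f R) :=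
      gspec _ R _ hX (fun S hS => (Finset.mem_union.mp hS).elim (hTa S) (hTb S))
        (by rw [Finset.sup_union, ← ha, ← hb])
    rw [h1, h2, h3, Finset.sup_union]
  have hinf : ∀ a b : A, g0 (a ⊓ b) = g0 a ⊓ g0 b := by
    intro a b
    obtain ⟨R, Ta, Tb, hX, hTa, hTb, ha, hb⟩ := pair a b
    have h1 : g0 a = Ta.sup (ep f R) := gspec a R Ta hX hTa ha
    have h2 : g0 b = Tb.sup (ep f R) := gspec b R Tb hX hTb hb
    have h3 : g0 (a ⊓ b) = (Ta ∩ Tb).sup (ep f R) :=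
      gspec _ R _ hX (fun S hS => hTa S (Finset.mem_of_mem_inter_left hS))
        (by rw [← sup_inter id hTa hTb, ← ha, ← hb])
    rw [h1, h2, h3, ← sup_inter f hTa hTb]
  have htop : g0 ⊤ = ⊤ := by
    have h := gspec ⊤ ∅ {∅} (by simp) (by simp) (by simp)
    simpa using h
  have hbot : g0 ⊥ = ⊥ := by
    have h := gspec ⊥ ∅ ∅ (by simp) (by simp) (by simp)
    simpa using h
  have hXval : ∀ x ∈ X, g0 x = f x := by
    intro x hx
    have h := gspec x {x} {{x}} (by simpa using hx) (by simp) (by simp [ep])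
    simpa [ep] using h
  have hcompl : ∀ x : A, (g0 x)ᶜ = g0 xᶜ := by
    intro x
    refine (IsCompl.of_eq ?_ ?_).compl_eq
    · rw [← hinf, inf_compl_eq_bot, hbot]
    · rw [← hsup, sup_compl_eq_top, htop]
  refine ⟨⟨⟨⟨g0, hsup⟩, hinf⟩, htop, hbot⟩, hXval, ?_⟩
  intro g' hg'
  have key : ∀ a : A, Gen X a → g' a = g0 a := by
    intro a ha
    induction ha with
    | @of x hx => rw [hg' x hx, hXval x hx]
    | bot => rw [map_bot]; exact hbot.symm
    | top => rw [map_top]; exact htop.symm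
    | inf hx hy ihx ihy =>
      rw [map_inf, ihx, ihy]
      exact (hinf _ _).symm
    | sup hx hy ihx ihy =>
      rw [map_sup, ihx, ihy]
      exact (hsup _ _).symm
    | compl hx ihx =>
      rw [map_compl', ihx]
      exact hcompl _
  ext a
  exact key a (hgen a)
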